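/- Let N ≥ 4, 2 ≤ k ≤ N, N_k := max{2(N−k−1), N−k}, and consider the N-qubit state ρ^{(D_2^N)} = a |D_2^N⟩⟨D_2^N| + (1−a) I_N / 2^N with 0 ≤ a ≤ 1. If a > ( 2 C(N,2)(N−2) + N_k C(N,2) ) / ( 2 C(N,2)(N−2) + N_k C(N,2) − 2^N N_k + 2^{N+1}(N−2) ), then ρ^{(D_2^N)} is k-nonseparable (not k-separable). -/

import Mathlib

open scoped BigOperators

noncomputable section

namespace Qubits

/-- The outer product `|ψ⟩⟨ψ|` of an `N`-qubit state vector, as a matrix in the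
computational basis (indexed by configurations `Fin N → Fin 2`). -/
def outer {N : ℕ} (ψ : (Fin N → Fin 2) → ℂ) :
    Matrix (Fin N → Fin 2) (Fin N → Fin 2) ℂ :=
  Matrix.vecMulVec ψ (star ψ)

/-- A pure `N`-qubit state is `k`-separable if `{1,…,N}` can be partitioned into `k`
(pairwise disjoint, nonempty) parts — the fibers of a surjection `P : Fin N → Fin k` —
such that `ψ` factorizes as a product of `k` functions, the `l`-th of which depends
only on the qubits in part `l`. -/
def kSepPure {N : ℕ} (k : ℕ) (ψ : (Fin N → Fin 2) → ℂ) : Prop :=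
  ∃ P : Fin N → Fin k, Function.Surjective P ∧
    ∃ f : Fin k → ((Fin N → Fin 2) → ℂ),
      (∀ l x y, (∀ i, P i = l → x i = y i) → f l x = f l y) ∧
      ∀ x, ψ x = ∏ l, f l x

/-- An `N`-qubit density matrix is `k`-separable if it is a convex combination of
projectors onto `k`-separable pure (unit) states, possibly separable with respect
to different partitions. -/
def kSep {N : ℕ} (k : ℕ) (ρ : Matrix (Fin N → Fin 2) (Fin N → Fin 2) ℂ) : Prop :=
  ∃ (n : ℕ) (p : Fin n → ℝ) (ψ : Fin n → (Fin N → Fin 2) → ℂ),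
    (∀ s, 0 ≤ p s) ∧ (∑ s, p s = 1) ∧
    (∀ s, ∑ x, Complex.normSq (ψ s x) = 1) ∧
    (∀ s, kSepPure k (ψ s)) ∧
    ρ = ∑ s, (p s : ℂ) • outer (ψ s)

/-- The `N`-qubit Dicke state with `m` excitations,
`|D_m^N⟩ = C(N,m)^{-1/2} Σ_{|S| = m} |e_S⟩`, as a vector of computational-basis
coefficients. -/
def dicke (N m : ℕ) : (Fin N → Fin 2) → ℂ :=
  fun x => if (Finset.univ.filter fun i => x i = 1).card = m
    then (((Real.sqrt (N.choose m))⁻¹ : ℝ) : ℂ) else 0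

end Qubits

namespace DickeAux
open Qubits Finset

variable {N : ℕ}

def e1 (m : Fin N) : Fin N → Fin 2 := fun t => if t = m then 1 else 0
def e2 (m i : Fin N) : Fin N → Fin 2 := fun t => if t = m ∨ t = i then 1 else 0
def e3 (m i j : Fin N) : Fin N → Fin 2 := fun t => if t = m ∨ t = i ∨ t = j then 1 else 0

lemma e2_comm (m i : Fin N) : e2 m i = e2 i m := by
  funext t; simp [e2, or_comm]

lemma filter_e1 (m : Fin N) : (Finset.univ.filter fun t => e1 m t = 1) = {m} := by
  ext t; by_cases h : t = m <;> simp [e1, h]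

lemma filter_e2 {m i : Fin N} : (Finset.univ.filter fun t => e2 m i t = 1) = {m, i} := by
  ext t; by_cases h : t = m ∨ t = i <;> simp [e2, h] <;> tauto

lemma filter_e3 {m i j : Fin N} :
    (Finset.univ.filter fun t => e3 m i j t = 1) = {m, i, j} := by
  ext t; by_cases h : t = m ∨ t = i ∨ t = j <;> simp [e3, h] <;> tauto

lemma dicke_e1 (m : Fin N) : dicke N 2 (e1 m) = 0 := by
  rw [dicke]; rw [if_neg]; rw [filter_e1]; simp

lemma dicke_e2 {m i : Fin N} (h : m ≠ i) :
    dicke N 2 (e2 m i) = (((Real.sqrt (N.choose 2))⁻¹ : ℝ) : ℂ) := by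
  rw [dicke, if_pos]; rw [filter_e2]; exact Finset.card_pair h

lemma dicke_e3 {m i j : Fin N} (hmi : m ≠ i) (hmj : m ≠ j) (hij : i ≠ j) :
    dicke N 2 (e3 m i j) = 0 := by
  rw [dicke, if_neg]; rw [filter_e3]
  rw [Finset.card_insert_of_notMem (by simp [hmi, hmj]), Finset.card_pair hij]
  simp

lemma e2_ne {m i j : Fin N} (hij : i ≠ j) (hjm : j ≠ m) : e2 m i ≠ e2 m j := by
  intro h
  have := congrFun h j
  simp [e2, hjm, (Ne.symm hij : j ≠ i)] at this

def T3 (N : ℕ) : Finset (Fin N × Fin N × Fin N) :=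
  Finset.univ.filter fun t => t.1 ≠ t.2.1 ∧ t.1 ≠ t.2.2 ∧ t.2.1 ≠ t.2.2

def P2 (N : ℕ) : Finset (Fin N × Fin N) := Finset.univ.filter fun p => p.1 ≠ p.2

lemma mem_T3 {t : Fin N × Fin N × Fin N} :
    t ∈ T3 N ↔ t.1 ≠ t.2.1 ∧ t.1 ≠ t.2.2 ∧ t.2.1 ≠ t.2.2 := by simp [T3]

lemma mem_P2 {p : Fin N × Fin N} : p ∈ P2 N ↔ p.1 ≠ p.2 := by simp [P2]

lemma card_P2 : (P2 N).card = N * (N - 1) := by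
  classical
  rw [Finset.card_eq_sum_card_fiberwise (f := Prod.fst) (t := Finset.univ)
    (fun x _ => mem_univ _)]
  have h : ∀ m : Fin N, ((P2 N).filter fun p => p.1 = m).card = N - 1 := by
    intro m
    have : ((P2 N).filter fun p => p.1 = m).card = (Finset.univ.erase m).card := by
      apply Finset.card_nbij' (i := fun p => p.2) (j := fun x => (m, x))
      · intro p hp
        simp only [Finset.mem_coe, Finset.mem_filter, mem_P2] at hp
        exact Finset.mem_erase.mpr ⟨by rw [← hp.2]; exact (Ne.symm hp.1), mem_univ _⟩
      · intro x hx
        exact Finset.mem_filter.mpr ⟨mem_P2.mpr (Ne.symm (Finset.mem_erase.mp hx).1), rfl⟩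
      · intro p hp
        simp only [Finset.mem_coe, Finset.mem_filter, mem_P2] at hp
        exact Prod.ext hp.2.symm rfl
      · intro x hx; rfl
    rw [this, Finset.card_erase_of_mem (mem_univ _), Finset.card_univ, Fintype.card_fin]
  simp only [h, Finset.sum_const, Finset.card_univ, Fintype.card_fin, smul_eq_mul]

lemma card_T3 : (T3 N).card = N * (N - 1) * (N - 2) := by
  classical
  rw [Finset.card_eq_sum_card_fiberwise (f := fun t => (t.1, t.2.1)) (t := P2 N)
    (fun t ht => mem_P2.mpr (mem_T3.mp ht).1)]
  have h : ∀ q ∈ P2 N, ((T3 N).filter fun t => (t.1, t.2.1) = q).card = N - 1 - 1 := by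
    intro q hq
    have hq' := mem_P2.mp hq
    have : ((T3 N).filter fun t => (t.1, t.2.1) = q).card
        = ((Finset.univ.erase q.1).erase q.2).card := by
      apply Finset.card_nbij' (i := fun t => t.2.2) (j := fun x => (q.1, q.2, x))
      · intro t ht
        rw [Finset.mem_coe, Finset.mem_filter] at ht
        obtain ⟨htT, hteq⟩ := ht
        obtain ⟨h1, h2, h3⟩ := mem_T3.mp htT
        have e1' : t.1 = q.1 := congrArg Prod.fst hteq
        have e2' : t.2.1 = q.2 := congrArg (fun z => z.2) hteq
        exact Finset.mem_erase.mpr ⟨by rw [← e2']; exact Ne.symm h3,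
          Finset.mem_erase.mpr ⟨by rw [← e1']; exact Ne.symm h2, mem_univ _⟩⟩
      · intro x hx
        obtain ⟨hx1, hx2⟩ := Finset.mem_erase.mp hx
        obtain ⟨hx3, _⟩ := Finset.mem_erase.mp hx2
        exact Finset.mem_filter.mpr ⟨mem_T3.mpr ⟨hq', Ne.symm hx3, Ne.symm hx1⟩, rfl⟩
      · intro t ht
        rw [Finset.mem_coe, Finset.mem_filter] at ht
        rw [← ht.2]
      · intro x hx; rfl
    rw [this, Finset.card_erase_of_mem, Finset.card_erase_of_mem (mem_univ _),
      Finset.card_univ, Fintype.card_fin]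
    exact Finset.mem_erase.mpr ⟨Ne.symm hq', mem_univ _⟩
  rw [Finset.sum_congr rfl h, Finset.sum_const, card_P2, smul_eq_mul]
  have : N - 1 - 1 = N - 2 := by omega
  rw [this]


lemma fiber_card {k : ℕ} (P : Fin N → Fin k) (hs : Function.Surjective P) (l : Fin k) :
    (Finset.univ.filter fun j => P j = l).card + (k - 1) ≤ N := by
  classical
  have h1 : (Finset.univ.erase l) ⊆ (Finset.univ.filter fun j => ¬ P j = l).image P := by
    intro l' hl'
    obtain ⟨x, hx⟩ := hs l'
    have hne : l' ≠ l := (Finset.mem_erase.mp hl').1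
    exact Finset.mem_image.mpr ⟨x, Finset.mem_filter.mpr ⟨mem_univ _,
      by rw [hx]; exact hne⟩, hx⟩
  have h2 : k - 1 ≤ (Finset.univ.filter fun j => ¬ P j = l).card := by
    calc k - 1 = (Finset.univ.erase l).card := by
          rw [Finset.card_erase_of_mem (mem_univ _), Finset.card_univ, Fintype.card_fin]
      _ ≤ ((Finset.univ.filter fun j => ¬ P j = l).image P).card := Finset.card_le_card h1
      _ ≤ _ := Finset.card_image_le
  have h3 : (Finset.univ.filter fun j => P j = l).card
      + (Finset.univ.filter fun j => ¬ P j = l).card = N := by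
    rw [Finset.card_filter_add_card_filter_not, Finset.card_univ, Fintype.card_fin]
  omega

lemma fiber2_card {k : ℕ} (P : Fin N → Fin k) (hs : Function.Surjective P) (l1 l2 : Fin k)
    (h12 : l1 ≠ l2) :
    (Finset.univ.filter fun j => P j = l1 ∨ P j = l2).card + (k - 2) ≤ N := by
  classical
  have h1 : ((Finset.univ.erase l1).erase l2)
      ⊆ (Finset.univ.filter fun j => ¬ (P j = l1 ∨ P j = l2)).image P := by
    intro l' hl'
    obtain ⟨hl2, hl3⟩ := Finset.mem_erase.mp hl'
    have hl1 : l' ≠ l1 := (Finset.mem_erase.mp hl3).1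
    obtain ⟨x, hx⟩ := hs l'
    exact Finset.mem_image.mpr ⟨x, Finset.mem_filter.mpr ⟨mem_univ _,
      by rw [hx]; rintro (h | h) <;> [exact hl1 h; exact hl2 h]⟩, hx⟩
  have h2 : k - 2 ≤ (Finset.univ.filter fun j => ¬ (P j = l1 ∨ P j = l2)).card := by
    calc k - 2 = ((Finset.univ.erase l1).erase l2).card := by
          rw [Finset.card_erase_of_mem (Finset.mem_erase.mpr ⟨Ne.symm h12, mem_univ _⟩),
            Finset.card_erase_of_mem (mem_univ _), Finset.card_univ, Fintype.card_fin]
          omega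
      _ ≤ _ := le_trans (Finset.card_le_card h1) Finset.card_image_le
  have h3 : (Finset.univ.filter fun j => P j = l1 ∨ P j = l2).card
      + (Finset.univ.filter fun j => ¬ (P j = l1 ∨ P j = l2)).card = N := by
    rw [Finset.card_filter_add_card_filter_not, Finset.card_univ, Fintype.card_fin]
  omega

lemma cnt_bound {k Nk : ℕ} (hk2 : 2 ≤ k) (hNk : Nk = max (2*(N-k-1)) (N-k))
    (P : Fin N → Fin k) (hs : Function.Surjective P) {m i : Fin N} (hmi : m ≠ i) :
    (Finset.univ.filter fun j => j ≠ m ∧ j ≠ i ∧ P j = P i).card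
      + (Finset.univ.filter fun j => j ≠ i ∧ j ≠ m ∧ P j = P m).card ≤ Nk := by
  classical
  have hNk1 : 2*(N-k-1) ≤ Nk := hNk ▸ le_max_left _ _
  have hNk2 : N-k ≤ Nk := hNk ▸ le_max_right _ _
  by_cases hP : P m = P i
  · have hBA : (Finset.univ.filter fun j => j ≠ i ∧ j ≠ m ∧ P j = P m)
        = (Finset.univ.filter fun j => j ≠ m ∧ j ≠ i ∧ P j = P i) := by
      ext j
      simp only [Finset.mem_filter, mem_univ, true_and]
      rw [hP]; tauto
    rw [hBA]
    set A := Finset.univ.filter fun j => j ≠ m ∧ j ≠ i ∧ P j = P i with hA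
    have hsub : A ∪ {m, i} ⊆ Finset.univ.filter fun j => P j = P i := by
      intro j hj
      rcases Finset.mem_union.mp hj with hj | hj
      · simp only [hA, Finset.mem_filter] at hj
        exact Finset.mem_filter.mpr ⟨mem_univ _, hj.2.2.2⟩
      · rcases Finset.mem_insert.mp hj with rfl | hj
        · exact Finset.mem_filter.mpr ⟨mem_univ _, hP⟩
        · rw [Finset.mem_singleton] at hj; subst hj
          exact Finset.mem_filter.mpr ⟨mem_univ _, rfl⟩
    have hdisj : Disjoint A ({m, i} : Finset (Fin N)) := by
      rw [Finset.disjoint_left]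
      intro j hj hj2
      simp only [hA, Finset.mem_filter] at hj
      rcases Finset.mem_insert.mp hj2 with rfl | hj2
      · exact hj.2.1 rfl
      · rw [Finset.mem_singleton] at hj2; exact hj.2.2.1 hj2
    have hcard : A.card + 2 ≤ (Finset.univ.filter fun j => P j = P i).card := by
      have h := Finset.card_le_card hsub
      rwa [Finset.card_union_of_disjoint hdisj, Finset.card_pair hmi] at h
    have hf := fiber_card P hs (P i)
    omega
  · set A := Finset.univ.filter fun j => j ≠ m ∧ j ≠ i ∧ P j = P i with hA
    set B := Finset.univ.filter fun j => j ≠ i ∧ j ≠ m ∧ P j = P m with hB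
    have hsub : (A ∪ B) ∪ {m, i} ⊆ Finset.univ.filter fun j => P j = P i ∨ P j = P m := by
      intro j hj
      rcases Finset.mem_union.mp hj with hj | hj
      · rcases Finset.mem_union.mp hj with hj | hj
        · simp only [hA, Finset.mem_filter] at hj
          exact Finset.mem_filter.mpr ⟨mem_univ _, Or.inl hj.2.2.2⟩
        · simp only [hB, Finset.mem_filter] at hj
          exact Finset.mem_filter.mpr ⟨mem_univ _, Or.inr hj.2.2.2⟩
      · rcases Finset.mem_insert.mp hj with rfl | hj
        · exact Finset.mem_filter.mpr ⟨mem_univ _, Or.inr rfl⟩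
        · rw [Finset.mem_singleton] at hj; subst hj
          exact Finset.mem_filter.mpr ⟨mem_univ _, Or.inl rfl⟩
    have hdisjAB : Disjoint A B := by
      rw [Finset.disjoint_left]
      intro j hj hj2
      simp only [hA, Finset.mem_filter] at hj
      simp only [hB, Finset.mem_filter] at hj2
      exact hP (hj2.2.2.2.symm.trans hj.2.2.2)
    have hdisjU : Disjoint (A ∪ B) ({m, i} : Finset (Fin N)) := by
      rw [Finset.disjoint_left]
      intro j hj hj2
      have hjm : j ≠ m ∧ j ≠ i := by
        rcases Finset.mem_union.mp hj with hj | hj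
        · simp only [hA, Finset.mem_filter] at hj; exact ⟨hj.2.1, hj.2.2.1⟩
        · simp only [hB, Finset.mem_filter] at hj; exact ⟨hj.2.2.1, hj.2.1⟩
      rcases Finset.mem_insert.mp hj2 with rfl | hj2
      · exact hjm.1 rfl
      · rw [Finset.mem_singleton] at hj2; exact hjm.2 hj2
    have hcard : A.card + B.card + 2
        ≤ (Finset.univ.filter fun j => P j = P i ∨ P j = P m).card := by
      have h := Finset.card_le_card hsub
      rwa [Finset.card_union_of_disjoint hdisjU, Finset.card_union_of_disjoint hdisjAB,
        Finset.card_pair hmi] at h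
    have hf := fiber2_card P hs (P i) (P m) (fun h => hP h.symm)
    omega

lemma good_id {k : ℕ} (P : Fin N → Fin k) (f : Fin k → ((Fin N → Fin 2) → ℂ))
    (hf : ∀ l x y, (∀ i, P i = l → x i = y i) → f l x = f l y)
    (ψ : (Fin N → Fin 2) → ℂ) (hprod : ∀ x, ψ x = ∏ l, f l x)
    {m i j : Fin N} (hmi : m ≠ i) (hmj : m ≠ j) (hij : i ≠ j) (hP : P i ≠ P j) :
    ψ (e2 m i) * ψ (e2 m j) = ψ (e1 m) * ψ (e3 m i j) := by
  rw [hprod, hprod, hprod, hprod, ← Finset.prod_mul_distrib, ← Finset.prod_mul_distrib]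
  refine Finset.prod_congr rfl fun l _ => ?_
  by_cases hl : P j = l
  · have h1 : f l (e2 m i) = f l (e1 m) := by
      apply hf
      intro t ht
      have hti : t ≠ i := by rintro rfl; exact hP (ht.trans hl.symm)
      simp [e2, e1, hti]
    have h2 : f l (e2 m j) = f l (e3 m i j) := by
      apply hf
      intro t ht
      have hti : t ≠ i := by rintro rfl; exact hP (ht.trans hl.symm)
      simp [e2, e3, hti]
    rw [h1, h2]
  · have h1 : f l (e2 m i) = f l (e3 m i j) := by
      apply hf
      intro t ht
      have htj : t ≠ j := by rintro rfl; exact hl ht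
      simp [e2, e3, htj]
    have h2 : f l (e2 m j) = f l (e1 m) := by
      apply hf
      intro t ht
      have htj : t ≠ j := by rintro rfl; exact hl ht
      simp [e2, e1, htj]
    rw [h1, h2]
    ring


lemma pure_bound {k Nk : ℕ} (hk2 : 2 ≤ k) (hNk : Nk = max (2*(N-k-1)) (N-k))
    (ψ : (Fin N → Fin 2) → ℂ) (h : kSepPure k ψ) :
    ∑ t ∈ T3 N, ‖ψ (e2 t.1 t.2.1)‖ * ‖ψ (e2 t.1 t.2.2)‖ ≤
      (∑ t ∈ T3 N, ‖ψ (e1 t.1)‖ * ‖ψ (e3 t.1 t.2.1 t.2.2)‖)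
      + (Nk : ℝ)/2 * ∑ q ∈ P2 N, ‖ψ (e2 q.1 q.2)‖^2 := by
  classical
  obtain ⟨P, hPs, f, hf, hprod⟩ := h
  have hsplit := Finset.sum_filter_add_sum_filter_not (T3 N)
    (fun t => P t.2.1 = P t.2.2) (fun t => ‖ψ (e2 t.1 t.2.1)‖ * ‖ψ (e2 t.1 t.2.2)‖)
  set Bad := (T3 N).filter (fun t => P t.2.1 = P t.2.2) with hBad
  have hgood : ∑ t ∈ (T3 N).filter (fun t => ¬ P t.2.1 = P t.2.2),
      ‖ψ (e2 t.1 t.2.1)‖ * ‖ψ (e2 t.1 t.2.2)‖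
      ≤ ∑ t ∈ T3 N, ‖ψ (e1 t.1)‖ * ‖ψ (e3 t.1 t.2.1 t.2.2)‖ := by
    have heq : ∀ t ∈ (T3 N).filter (fun t => ¬ P t.2.1 = P t.2.2),
        ‖ψ (e2 t.1 t.2.1)‖ * ‖ψ (e2 t.1 t.2.2)‖
        = ‖ψ (e1 t.1)‖ * ‖ψ (e3 t.1 t.2.1 t.2.2)‖ := by
      intro t ht
      obtain ⟨htT, htP⟩ := Finset.mem_filter.mp ht
      obtain ⟨h1, h2, h3⟩ := mem_T3.mp htT
      have hid := good_id P f hf ψ hprod h1 h2 h3 htP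
      have h4 := congrArg norm hid
      rwa [norm_mul, norm_mul] at h4
    rw [Finset.sum_congr rfl heq]
    exact Finset.sum_le_sum_of_subset_of_nonneg (Finset.filter_subset _ _)
      (fun t _ _ => mul_nonneg (norm_nonneg _) (norm_nonneg _))
  have hbadsum : ∑ t ∈ Bad, ‖ψ (e2 t.1 t.2.1)‖ * ‖ψ (e2 t.1 t.2.2)‖
      ≤ (Nk : ℝ)/2 * ∑ q ∈ P2 N, ‖ψ (e2 q.1 q.2)‖^2 := by
    have step1 : ∑ t ∈ Bad, ‖ψ (e2 t.1 t.2.1)‖ * ‖ψ (e2 t.1 t.2.2)‖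
        ≤ ∑ t ∈ Bad, (‖ψ (e2 t.1 t.2.1)‖^2 + ‖ψ (e2 t.1 t.2.2)‖^2)/2 :=
      Finset.sum_le_sum fun t _ => by
        nlinarith [sq_nonneg (‖ψ (e2 t.1 t.2.1)‖ - ‖ψ (e2 t.1 t.2.2)‖)]
    have hswapmem : ∀ t ∈ Bad, (t.1, t.2.2, t.2.1) ∈ Bad := by
      intro t ht
      obtain ⟨htT, htP⟩ := Finset.mem_filter.mp ht
      obtain ⟨h1, h2, h3⟩ := mem_T3.mp htT
      exact Finset.mem_filter.mpr ⟨mem_T3.mpr ⟨h2, h1, Ne.symm h3⟩, htP.symm⟩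
    have step2 : ∑ t ∈ Bad, ‖ψ (e2 t.1 t.2.2)‖^2 = ∑ t ∈ Bad, ‖ψ (e2 t.1 t.2.1)‖^2 :=
      Finset.sum_nbij' (i := fun t => (t.1, t.2.2, t.2.1)) (j := fun t => (t.1, t.2.2, t.2.1))
        hswapmem hswapmem (fun t _ => rfl) (fun t _ => rfl) (fun t _ => rfl)
    set cnt := fun (q : Fin N × Fin N) => Finset.univ.filter
      (fun j => j ≠ q.1 ∧ j ≠ q.2 ∧ P j = P q.2) with hcnt
    set w := fun (q : Fin N × Fin N) => ‖ψ (e2 q.1 q.2)‖^2 with hw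
    have step3 : ∑ t ∈ Bad, ‖ψ (e2 t.1 t.2.1)‖^2
        = ∑ q ∈ P2 N, ((cnt q).card : ℝ) * w q := by
      have h5 : ∑ t ∈ Bad, ‖ψ (e2 t.1 t.2.1)‖^2
          = ∑ x ∈ (P2 N).sigma (fun q => cnt q), ‖ψ (e2 x.1.1 x.1.2)‖^2 := by
        apply Finset.sum_nbij'
          (i := fun t => (⟨(t.1, t.2.1), t.2.2⟩ : Σ _ : Fin N × Fin N, Fin N))
          (j := fun x => (x.1.1, x.1.2, x.2))
        · intro t ht
          obtain ⟨htT, htP⟩ := Finset.mem_filter.mp ht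
          obtain ⟨h1, h2, h3⟩ := mem_T3.mp htT
          refine Finset.mem_sigma.mpr ⟨mem_P2.mpr h1, ?_⟩
          simp only [hcnt]
          exact Finset.mem_filter.mpr ⟨mem_univ _, ⟨Ne.symm h2, Ne.symm h3, htP.symm⟩⟩
        · intro x hx
          obtain ⟨hx1, hx2⟩ := Finset.mem_sigma.mp hx
          simp only [hcnt] at hx2
          obtain ⟨-, hj1, hj2, hj3⟩ := Finset.mem_filter.mp hx2
          exact Finset.mem_filter.mpr
            ⟨mem_T3.mpr ⟨mem_P2.mp hx1, Ne.symm hj1, Ne.symm hj2⟩, hj3.symm⟩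
        · intro t _; rfl
        · intro x _; rfl
        · intro t _; rfl
      rw [h5, Finset.sum_sigma]
      refine Finset.sum_congr rfl fun q _ => ?_
      show ∑ _j ∈ cnt q, w q = ((cnt q).card : ℝ) * w q
      rw [Finset.sum_const, nsmul_eq_mul]
    have hsymm : ∑ q ∈ P2 N, ((cnt q).card : ℝ) * w q
        = ∑ q ∈ P2 N, ((cnt (q.2, q.1)).card : ℝ) * w q := by
      apply Finset.sum_nbij' (i := Prod.swap) (j := Prod.swap)
      · intro q hq; exact mem_P2.mpr (Ne.symm (mem_P2.mp hq))
      · intro q hq; exact mem_P2.mpr (Ne.symm (mem_P2.mp hq))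
      · intro q _; exact Prod.swap_swap q
      · intro q _; exact Prod.swap_swap q
      · intro q _
        show ((cnt q).card : ℝ) * w q = ((cnt q).card : ℝ) * w (q.2, q.1)
        have h2 : w (q.2, q.1) = w q := by
          simp only [hw]
          rw [e2_comm q.2 q.1]
        rw [h2]
    have hbound : ∀ q ∈ P2 N, ((cnt q).card : ℝ) + ((cnt (q.2, q.1)).card : ℝ) ≤ (Nk : ℝ) := by
      intro q hq
      have hb := cnt_bound hk2 hNk P hPs (mem_P2.mp hq)
      simp only [hcnt]
      exact_mod_cast hb
    have step4 : ∑ q ∈ P2 N, ((cnt q).card : ℝ) * w q ≤ (Nk:ℝ)/2 * ∑ q ∈ P2 N, w q := by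
      have h2 : 2 * ∑ q ∈ P2 N, ((cnt q).card : ℝ) * w q
          = ∑ q ∈ P2 N, (((cnt q).card : ℝ) + ((cnt (q.2, q.1)).card : ℝ)) * w q := by
        rw [two_mul]
        nth_rewrite 2 [hsymm]
        rw [← Finset.sum_add_distrib]
        exact Finset.sum_congr rfl fun q _ => by ring
      have h3 : ∑ q ∈ P2 N, (((cnt q).card : ℝ) + ((cnt (q.2, q.1)).card : ℝ)) * w q
          ≤ ∑ q ∈ P2 N, (Nk:ℝ) * w q :=
        Finset.sum_le_sum fun q hq => mul_le_mul_of_nonneg_right (hbound q hq)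
          (by simp only [hw]; positivity)
      have h4 : ∑ q ∈ P2 N, (Nk:ℝ) * w q = (Nk:ℝ) * ∑ q ∈ P2 N, w q := by
        rw [Finset.mul_sum]
      linarith
    have e5 : ∑ t ∈ Bad, (‖ψ (e2 t.1 t.2.1)‖^2 + ‖ψ (e2 t.1 t.2.2)‖^2)/2
        = ∑ q ∈ P2 N, ((cnt q).card : ℝ) * w q := by
      have h6 : ∑ t ∈ Bad, (‖ψ (e2 t.1 t.2.1)‖^2 + ‖ψ (e2 t.1 t.2.2)‖^2)/2
          = (∑ t ∈ Bad, ‖ψ (e2 t.1 t.2.1)‖^2 + ∑ t ∈ Bad, ‖ψ (e2 t.1 t.2.2)‖^2)/2 := by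
        rw [← Finset.sum_add_distrib, ← Finset.sum_div]
      rw [h6, step2, step3]
      ring
    calc ∑ t ∈ Bad, ‖ψ (e2 t.1 t.2.1)‖ * ‖ψ (e2 t.1 t.2.2)‖
        ≤ ∑ t ∈ Bad, (‖ψ (e2 t.1 t.2.1)‖^2 + ‖ψ (e2 t.1 t.2.2)‖^2)/2 := step1
      _ = ∑ q ∈ P2 N, ((cnt q).card : ℝ) * w q := e5
      _ ≤ (Nk:ℝ)/2 * ∑ q ∈ P2 N, w q := step4
  linarith

lemma criterion {k Nk n : ℕ} (hk2 : 2 ≤ k) (hNk : Nk = max (2*(N-k-1)) (N-k))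
    (ρ : Matrix (Fin N → Fin 2) (Fin N → Fin 2) ℂ)
    (p : Fin n → ℝ) (ψ : Fin n → (Fin N → Fin 2) → ℂ)
    (hp0 : ∀ s, 0 ≤ p s) (hsep : ∀ s, kSepPure k (ψ s))
    (hρ : ρ = ∑ s, (p s : ℂ) • outer (ψ s)) :
    ∑ t ∈ T3 N, ‖ρ (e2 t.1 t.2.1) (e2 t.1 t.2.2)‖ ≤
      (∑ t ∈ T3 N, Real.sqrt ((ρ (e1 t.1) (e1 t.1)).re
        * (ρ (e3 t.1 t.2.1 t.2.2) (e3 t.1 t.2.1 t.2.2)).re))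
      + (Nk : ℝ)/2 * ∑ q ∈ P2 N, (ρ (e2 q.1 q.2) (e2 q.1 q.2)).re := by
  classical
  have hdiag : ∀ x, (ρ x x).re = ∑ s, p s * ‖ψ s x‖^2 := by
    intro x
    rw [hρ, Matrix.sum_apply, Complex.re_sum]
    refine Finset.sum_congr rfl fun s _ => ?_
    simp only [Matrix.smul_apply, outer, Matrix.vecMulVec_apply, Pi.star_apply, smul_eq_mul]
    have h1 : (ψ s x) * star (ψ s x) = ((‖ψ s x‖^2 : ℝ) : ℂ) := by
      rw [Complex.star_def, Complex.mul_conj, Complex.normSq_eq_norm_sq]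
    rw [h1, show ((p s : ℝ):ℂ) * ((‖ψ s x‖^2 : ℝ):ℂ) = ((p s * ‖ψ s x‖^2 : ℝ):ℂ) from by
      push_cast; ring, Complex.ofReal_re]
  have hoff : ∀ x y, ‖ρ x y‖ ≤ ∑ s, p s * (‖ψ s x‖ * ‖ψ s y‖) := by
    intro x y
    rw [hρ, Matrix.sum_apply]
    refine (norm_sum_le _ _).trans (Finset.sum_le_sum fun s _ => ?_)
    simp only [Matrix.smul_apply, outer, Matrix.vecMulVec_apply, Pi.star_apply, smul_eq_mul]
    rw [norm_mul, norm_mul, norm_star]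
    have h1 : ‖((p s : ℝ) : ℂ)‖ = p s := by
      rw [Complex.norm_real, Real.norm_eq_abs]; exact abs_of_nonneg (hp0 s)
    rw [h1]
  have hCS : ∀ u v : Fin N → Fin 2,
      (∑ s, p s * (‖ψ s u‖ * ‖ψ s v‖)) ≤ Real.sqrt ((ρ u u).re * (ρ v v).re) := by
    intro u v
    have hnn : 0 ≤ ∑ s, p s * (‖ψ s u‖ * ‖ψ s v‖) :=
      Finset.sum_nonneg fun s _ =>
        mul_nonneg (hp0 s) (mul_nonneg (norm_nonneg _) (norm_nonneg _))
    have hcs := Finset.sum_mul_sq_le_sq_mul_sq Finset.univ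
      (fun s => Real.sqrt (p s) * ‖ψ s u‖) (fun s => Real.sqrt (p s) * ‖ψ s v‖)
    have e1 : ∑ s, (Real.sqrt (p s) * ‖ψ s u‖) * (Real.sqrt (p s) * ‖ψ s v‖)
        = ∑ s, p s * (‖ψ s u‖ * ‖ψ s v‖) := by
      refine Finset.sum_congr rfl fun s _ => ?_
      rw [show (Real.sqrt (p s) * ‖ψ s u‖) * (Real.sqrt (p s) * ‖ψ s v‖)
        = (Real.sqrt (p s) * Real.sqrt (p s)) * (‖ψ s u‖ * ‖ψ s v‖) from by ring,
        Real.mul_self_sqrt (hp0 s)]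
    have e2 : ∑ s, (Real.sqrt (p s) * ‖ψ s u‖)^2 = (ρ u u).re := by
      rw [hdiag u]
      refine Finset.sum_congr rfl fun s _ => ?_
      rw [mul_pow, Real.sq_sqrt (hp0 s)]
    have e3 : ∑ s, (Real.sqrt (p s) * ‖ψ s v‖)^2 = (ρ v v).re := by
      rw [hdiag v]
      refine Finset.sum_congr rfl fun s _ => ?_
      rw [mul_pow, Real.sq_sqrt (hp0 s)]
    rw [e1, e2, e3] at hcs
    calc (∑ s, p s * (‖ψ s u‖ * ‖ψ s v‖))
        = Real.sqrt ((∑ s, p s * (‖ψ s u‖ * ‖ψ s v‖))^2) := (Real.sqrt_sq hnn).symm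
      _ ≤ _ := Real.sqrt_le_sqrt hcs
  have main : ∑ t ∈ T3 N, ‖ρ (e2 t.1 t.2.1) (e2 t.1 t.2.2)‖
      ≤ ∑ s, (p s * ∑ t ∈ T3 N, (‖ψ s (e1 t.1)‖ * ‖ψ s (e3 t.1 t.2.1 t.2.2)‖))
        + (Nk:ℝ)/2 * ∑ s, (p s * ∑ q ∈ P2 N, ‖ψ s (e2 q.1 q.2)‖^2) := by
    have h1 : ∑ t ∈ T3 N, ‖ρ (e2 t.1 t.2.1) (e2 t.1 t.2.2)‖
        ≤ ∑ s, (p s * ∑ t ∈ T3 N, (‖ψ s (e2 t.1 t.2.1)‖ * ‖ψ s (e2 t.1 t.2.2)‖)) := by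
      calc ∑ t ∈ T3 N, ‖ρ (e2 t.1 t.2.1) (e2 t.1 t.2.2)‖
          ≤ ∑ t ∈ T3 N, ∑ s, p s * (‖ψ s (e2 t.1 t.2.1)‖ * ‖ψ s (e2 t.1 t.2.2)‖) :=
            Finset.sum_le_sum fun t _ => hoff _ _
        _ = ∑ s, ∑ t ∈ T3 N, p s * (‖ψ s (e2 t.1 t.2.1)‖ * ‖ψ s (e2 t.1 t.2.2)‖) :=
            Finset.sum_comm
        _ = _ := Finset.sum_congr rfl fun s _ => by rw [Finset.mul_sum]
    have h2 : ∀ s, p s * ∑ t ∈ T3 N, (‖ψ s (e2 t.1 t.2.1)‖ * ‖ψ s (e2 t.1 t.2.2)‖)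
        ≤ p s * ∑ t ∈ T3 N, (‖ψ s (e1 t.1)‖ * ‖ψ s (e3 t.1 t.2.1 t.2.2)‖)
          + (Nk:ℝ)/2 * (p s * ∑ q ∈ P2 N, ‖ψ s (e2 q.1 q.2)‖^2) := by
      intro s
      have hb := mul_le_mul_of_nonneg_left (pure_bound hk2 hNk (ψ s) (hsep s)) (hp0 s)
      exact hb.trans (le_of_eq (by ring))
    calc ∑ t ∈ T3 N, ‖ρ (e2 t.1 t.2.1) (e2 t.1 t.2.2)‖
        ≤ ∑ s, (p s * ∑ t ∈ T3 N, (‖ψ s (e2 t.1 t.2.1)‖ * ‖ψ s (e2 t.1 t.2.2)‖)) := h1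
      _ ≤ ∑ s, (p s * ∑ t ∈ T3 N, (‖ψ s (e1 t.1)‖ * ‖ψ s (e3 t.1 t.2.1 t.2.2)‖)
          + (Nk:ℝ)/2 * (p s * ∑ q ∈ P2 N, ‖ψ s (e2 q.1 q.2)‖^2)) :=
            Finset.sum_le_sum fun s _ => h2 s
      _ = _ := by rw [Finset.sum_add_distrib, ← Finset.mul_sum]
  have hA : ∑ s, (p s * ∑ t ∈ T3 N, (‖ψ s (e1 t.1)‖ * ‖ψ s (e3 t.1 t.2.1 t.2.2)‖))
      ≤ ∑ t ∈ T3 N, Real.sqrt ((ρ (e1 t.1) (e1 t.1)).re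
        * (ρ (e3 t.1 t.2.1 t.2.2) (e3 t.1 t.2.1 t.2.2)).re) := by
    have e1 : ∑ s, (p s * ∑ t ∈ T3 N, (‖ψ s (e1 t.1)‖ * ‖ψ s (e3 t.1 t.2.1 t.2.2)‖))
        = ∑ t ∈ T3 N, ∑ s, p s * (‖ψ s (e1 t.1)‖ * ‖ψ s (e3 t.1 t.2.1 t.2.2)‖) := by
      rw [show (∑ s, (p s * ∑ t ∈ T3 N, (‖ψ s (e1 t.1)‖ * ‖ψ s (e3 t.1 t.2.1 t.2.2)‖)))
        = ∑ s, ∑ t ∈ T3 N, p s * (‖ψ s (e1 t.1)‖ * ‖ψ s (e3 t.1 t.2.1 t.2.2)‖) from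
        Finset.sum_congr rfl fun s _ => by rw [Finset.mul_sum], Finset.sum_comm]
    rw [e1]
    exact Finset.sum_le_sum fun t _ => hCS _ _
  have hB : ∑ s, (p s * ∑ q ∈ P2 N, ‖ψ s (e2 q.1 q.2)‖^2)
      = ∑ q ∈ P2 N, (ρ (e2 q.1 q.2) (e2 q.1 q.2)).re := by
    rw [show (∑ s, (p s * ∑ q ∈ P2 N, ‖ψ s (e2 q.1 q.2)‖^2))
      = ∑ s, ∑ q ∈ P2 N, p s * ‖ψ s (e2 q.1 q.2)‖^2 from
      Finset.sum_congr rfl fun s _ => by rw [Finset.mul_sum], Finset.sum_comm]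
    exact Finset.sum_congr rfl fun q _ => (hdiag _).symm
  rw [hB] at main
  linarith


set_option maxHeartbeats 1000000 in
theorem final (N k : ℕ) (hN : 4 ≤ N) (hk2 : 2 ≤ k) (hkN : k ≤ N)
    (Nk : ℕ) (hNk : Nk = max (2 * (N - k - 1)) (N - k))
    (a : ℝ) (ha0 : 0 ≤ a) (ha1 : a ≤ 1)
    (ha : a > (2 * (N.choose 2 : ℝ) * ((N : ℝ) - 2) + (Nk : ℝ) * (N.choose 2 : ℝ)) /
        (2 * (N.choose 2 : ℝ) * ((N : ℝ) - 2) + (Nk : ℝ) * (N.choose 2 : ℝ) -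
          2 ^ N * (Nk : ℝ) + 2 ^ (N + 1) * ((N : ℝ) - 2))) :
    ¬ kSep k ((a : ℂ) • outer (dicke N 2) +
        (((1 - a) / 2 ^ N : ℝ) : ℂ) • (1 : Matrix (Fin N → Fin 2) (Fin N → Fin 2) ℂ)) := by
  intro h
  classical
  obtain ⟨n, p, ψ, hp0, -, -, hsepP, hρ⟩ := h
  have crit := criterion (N := N) hk2 hNk _ p ψ hp0 hsepP hρ
  set M := (a : ℂ) • outer (dicke N 2) +
      (((1 - a) / 2 ^ N : ℝ) : ℂ) • (1 : Matrix (Fin N → Fin 2) (Fin N → Fin 2) ℂ) with hM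
  have hc0 : (0:ℝ) ≤ (1 - a) / 2 ^ N := div_nonneg (by linarith) (by positivity)
  have hCpos : (0:ℝ) < (N.choose 2 : ℝ) := by
    exact_mod_cast Nat.choose_pos (show 2 ≤ N by omega)
  have hrrC : ((Real.sqrt (N.choose 2))⁻¹ : ℝ) * (Real.sqrt (N.choose 2))⁻¹
      = ((N.choose 2 : ℝ))⁻¹ := by
    rw [← mul_inv, Real.mul_self_sqrt hCpos.le]
  have hmulC : ((((Real.sqrt (N.choose 2))⁻¹ : ℝ)) : ℂ) * ((((Real.sqrt (N.choose 2))⁻¹ : ℝ)) : ℂ)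
      = ((((N.choose 2 : ℝ))⁻¹ : ℝ) : ℂ) := by
    rw [← Complex.ofReal_mul, hrrC]
  have hCinv0 : (0:ℝ) ≤ ((N.choose 2 : ℝ))⁻¹ := inv_nonneg.mpr hCpos.le
  have hval1 : ∀ t ∈ T3 N, ‖M (e2 t.1 t.2.1) (e2 t.1 t.2.2)‖
      = a * ((N.choose 2 : ℝ))⁻¹ := by
    intro t ht
    obtain ⟨h1, h2, h3⟩ := mem_T3.mp ht
    have hne : e2 t.1 t.2.1 ≠ e2 t.1 t.2.2 := e2_ne h3 (Ne.symm h2)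
    have hv : M (e2 t.1 t.2.1) (e2 t.1 t.2.2)
        = ((a * ((N.choose 2 : ℝ))⁻¹ : ℝ) : ℂ) := by
      rw [hM]
      simp only [Matrix.add_apply, Matrix.smul_apply, Matrix.one_apply_ne hne, outer,
        Matrix.vecMulVec_apply, Pi.star_apply, smul_eq_mul]
      rw [dicke_e2 h1, dicke_e2 h2, Complex.star_def, Complex.conj_ofReal, hmulC,
        mul_zero, add_zero, ← Complex.ofReal_mul]
    rw [hv, Complex.norm_real, Real.norm_eq_abs,
      abs_of_nonneg (mul_nonneg ha0 hCinv0)]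
  have hval2 : ∀ m : Fin N, M (e1 m) (e1 m) = (((1 - a) / 2 ^ N : ℝ) : ℂ) := by
    intro m
    rw [hM]
    simp only [Matrix.add_apply, Matrix.smul_apply, Matrix.one_apply_eq, outer,
      Matrix.vecMulVec_apply, Pi.star_apply, smul_eq_mul]
    rw [dicke_e1]
    simp
  have hval3 : ∀ t ∈ T3 N, M (e3 t.1 t.2.1 t.2.2) (e3 t.1 t.2.1 t.2.2)
      = (((1 - a) / 2 ^ N : ℝ) : ℂ) := by
    intro t ht
    obtain ⟨h1, h2, h3⟩ := mem_T3.mp ht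
    rw [hM]
    simp only [Matrix.add_apply, Matrix.smul_apply, Matrix.one_apply_eq, outer,
      Matrix.vecMulVec_apply, Pi.star_apply, smul_eq_mul]
    rw [dicke_e3 h1 h2 h3]
    simp
  have hval4 : ∀ q ∈ P2 N, (M (e2 q.1 q.2) (e2 q.1 q.2)).re
      = a * ((N.choose 2 : ℝ))⁻¹ + (1 - a) / 2 ^ N := by
    intro q hq
    have h1 := mem_P2.mp hq
    have hv : M (e2 q.1 q.2) (e2 q.1 q.2)
        = ((a * ((N.choose 2 : ℝ))⁻¹ + (1 - a) / 2 ^ N : ℝ) : ℂ) := by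
      rw [hM]
      simp only [Matrix.add_apply, Matrix.smul_apply, Matrix.one_apply_eq, outer,
        Matrix.vecMulVec_apply, Pi.star_apply, smul_eq_mul]
      rw [dicke_e2 h1, Complex.star_def, Complex.conj_ofReal, hmulC,
        mul_one, ← Complex.ofReal_mul, ← Complex.ofReal_add]
    rw [hv, Complex.ofReal_re]
  have hsqrt : ∀ t ∈ T3 N, Real.sqrt ((M (e1 t.1) (e1 t.1)).re
      * (M (e3 t.1 t.2.1 t.2.2) (e3 t.1 t.2.1 t.2.2)).re) = (1 - a) / 2 ^ N := by
    intro t ht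
    rw [hval2 t.1, hval3 t ht, Complex.ofReal_re, Real.sqrt_mul_self hc0]
  have S1 : ∑ t ∈ T3 N, ‖M (e2 t.1 t.2.1) (e2 t.1 t.2.2)‖
      = ((T3 N).card : ℝ) * (a * ((N.choose 2 : ℝ))⁻¹) := by
    rw [Finset.sum_congr rfl hval1, Finset.sum_const, nsmul_eq_mul]
  have S2 : ∑ t ∈ T3 N, Real.sqrt ((M (e1 t.1) (e1 t.1)).re
      * (M (e3 t.1 t.2.1 t.2.2) (e3 t.1 t.2.1 t.2.2)).re)
      = ((T3 N).card : ℝ) * ((1 - a) / 2 ^ N) := by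
    rw [Finset.sum_congr rfl hsqrt, Finset.sum_const, nsmul_eq_mul]
  have S3 : ∑ q ∈ P2 N, (M (e2 q.1 q.2) (e2 q.1 q.2)).re
      = ((P2 N).card : ℝ) * (a * ((N.choose 2 : ℝ))⁻¹ + (1 - a) / 2 ^ N) := by
    rw [Finset.sum_congr rfl hval4, Finset.sum_const, nsmul_eq_mul]
  rw [S1, S2, S3] at crit
  have h2C : N * (N - 1) = 2 * N.choose 2 := by
    have hdvd : 2 ∣ N * (N - 1) := by
      rcases Nat.even_or_odd N with he | ho
      · exact Dvd.dvd.mul_right he.two_dvd _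
      · have he1 : Even (N - 1) := by
          rcases ho with ⟨m, hm⟩
          exact ⟨m, by omega⟩
        exact Dvd.dvd.mul_left he1.two_dvd _
    rw [Nat.choose_two_right]
    exact (Nat.mul_div_cancel' hdvd).symm
  have hT3R : ((T3 N).card : ℝ) = 2 * (N.choose 2 : ℝ) * ((N:ℝ) - 2) := by
    rw [card_T3]
    have e : N * (N - 1) * (N - 2) = 2 * N.choose 2 * (N - 2) := by rw [h2C]
    rw [e, Nat.cast_mul, Nat.cast_mul, Nat.cast_sub (show 2 ≤ N by omega)]
    push_cast
    ring
  have hP2R : ((P2 N).card : ℝ) = 2 * (N.choose 2 : ℝ) := by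
    rw [card_P2, h2C]
    push_cast
    ring
  have harrC : a * ((N.choose 2 : ℝ))⁻¹ * (N.choose 2 : ℝ) = a := by
    field_simp
  rw [hT3R, hP2R] at crit
  have e1 : 2 * (N.choose 2:ℝ) * ((N:ℝ)-2) * (a * ((N.choose 2 : ℝ))⁻¹)
      = 2 * ((N:ℝ)-2) * a := by
    rw [show 2 * (N.choose 2:ℝ) * ((N:ℝ)-2) * (a * ((N.choose 2 : ℝ))⁻¹)
      = 2 * ((N:ℝ)-2) * (a * ((N.choose 2 : ℝ))⁻¹ * (N.choose 2:ℝ)) from by ring, harrC]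
  have e2 : (Nk:ℝ)/2 * (2 * (N.choose 2:ℝ) * (a * ((N.choose 2 : ℝ))⁻¹ + (1-a)/2^N))
      = (Nk:ℝ) * a + (Nk:ℝ) * (N.choose 2:ℝ) * ((1-a)/2^N) := by
    rw [show (Nk:ℝ)/2 * (2 * (N.choose 2:ℝ) * (a * ((N.choose 2 : ℝ))⁻¹ + (1-a)/2^N))
      = (Nk:ℝ) * (a * ((N.choose 2 : ℝ))⁻¹ * (N.choose 2:ℝ))
        + (Nk:ℝ) * (N.choose 2:ℝ) * ((1-a)/2^N) from by ring, harrC]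
  have I : 2 * ((N:ℝ)-2) * a ≤ 2 * (N.choose 2:ℝ) * ((N:ℝ)-2) * ((1-a)/2^N)
      + (Nk:ℝ) * a + (Nk:ℝ) * (N.choose 2:ℝ) * ((1-a)/2^N) := by
    linarith [crit, e1, e2]
  have hE : (0:ℝ) < (2:ℝ)^N := by positivity
  have I2 := mul_le_mul_of_nonneg_left I hE.le
  have e3 : (2:ℝ)^N * (2 * (N.choose 2:ℝ) * ((N:ℝ)-2) * ((1-a)/2^N)
      + (Nk:ℝ) * a + (Nk:ℝ) * (N.choose 2:ℝ) * ((1-a)/2^N))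
      = (1-a) * (2 * (N.choose 2:ℝ) * ((N:ℝ)-2)) + (2:ℝ)^N * ((Nk:ℝ) * a)
        + (1-a) * ((Nk:ℝ) * (N.choose 2:ℝ)) := by
    field_simp
  rw [pow_succ] at ha
  have hNkR : (Nk:ℝ) ≤ 2*(N:ℝ) - 6 := by
    have hn : Nk ≤ 2*N - 6 := by rw [hNk]; exact max_le (by omega) (by omega)
    calc (Nk:ℝ) ≤ ((2*N - 6 : ℕ):ℝ) := Nat.cast_le.mpr hn
      _ = 2*(N:ℝ) - 6 := by rw [Nat.cast_sub (by omega)]; push_cast; ring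
  have hNk0 : (0:ℝ) ≤ (Nk:ℝ) := Nat.cast_nonneg _
  have hNR : (4:ℝ) ≤ (N:ℝ) := by exact_mod_cast hN
  have hden : (0:ℝ) < 2 * (N.choose 2 : ℝ) * ((N : ℝ) - 2) + (Nk : ℝ) * (N.choose 2 : ℝ) -
      2 ^ N * (Nk : ℝ) + 2 ^ N * 2 * ((N : ℝ) - 2) := by
    linarith [mul_pos hCpos (show (0:ℝ) < (N:ℝ)-2 by linarith),
      mul_nonneg hNk0 hCpos.le,
      mul_pos hE (show (0:ℝ) < 2*((N:ℝ)-2) - (Nk:ℝ) by linarith)]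
  have haden := (div_lt_iff₀ hden).mp ha
  linarith [I2, e3, haden]

end DickeAux

open Qubits in
/-- If `a` exceeds the stated threshold then the mixture of the `N`-qubit Dicke
state `|D_2^N⟩` with white noise is `k`-nonseparable, where
`N_k = max{2(N−k−1), N−k}` and `C = C(N,2)`. -/
theorem dicke2_noise_not_kSep
    (N k : ℕ) (hN : 4 ≤ N) (hk2 : 2 ≤ k) (hkN : k ≤ N)
    (Nk : ℕ) (hNk : Nk = max (2 * (N - k - 1)) (N - k))
    (a : ℝ) (ha0 : 0 ≤ a) (ha1 : a ≤ 1)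
    (ha : a > (2 * (N.choose 2 : ℝ) * ((N : ℝ) - 2) + (Nk : ℝ) * (N.choose 2 : ℝ)) /
        (2 * (N.choose 2 : ℝ) * ((N : ℝ) - 2) + (Nk : ℝ) * (N.choose 2 : ℝ) -
          2 ^ N * (Nk : ℝ) + 2 ^ (N + 1) * ((N : ℝ) - 2))) :
    ¬ kSep k ((a : ℂ) • outer (dicke N 2) +
        (((1 - a) / 2 ^ N : ℝ) : ℂ) • (1 : Matrix (Fin N → Fin 2) (Fin N → Fin 2) ℂ)) :=
  DickeAux.final N k hN hk2 hkN Nk hNk a ha0 ha1 ha
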